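/- Let I ≥ 2, let α > 0, β > 0, C > 0, and let π̂_1,…,π̂_I > 0 and θ̂_1,…,θ̂_I > 0. Consider the problem: maximize −(1/α)·Σ_{i=1}^I π̂_i·e^{−α z_i} over z ∈ ℝ^I subject to Σ_{i=1}^I θ̂_i·e^{β z_i} ≤ C. This problem has a unique optimal solution z*, given by z*_i = (1/(α+β))·ln(π̂_i/(ζ·θ̂_i)) for all i, where ζ = ( Σ_{k=1}^I θ̂_k^{α/(α+β)}·π̂_k^{β/(α+β)} / C )^{(α+β)/β}. Moreover, the post-trade normalized vector p'_i = θ̂_i·e^{β z*_i} / Σ_{k=1}^I θ̂_k·e^{β z*_k} satisfies p'_i = θ̂_i^{α/(α+β)}·π̂_i^{β/(α+β)} / Σ_{k=1}^I θ̂_k^{α/(α+β)}·π̂_k^{β/(α+β)} for all i. -/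

import Mathlib

lemma aux_key (α β : ℝ) (hα : 0 < α) (hβ : 0 < β) (d : ℝ) :
    0 ≤ β * (Real.exp (-(α*d)) - 1) + α * (Real.exp (β*d) - 1) := by
  nlinarith [Real.add_one_le_exp (-(α*d)), Real.add_one_le_exp (β*d)]

lemma aux_key_strict (α β : ℝ) (hα : 0 < α) (hβ : 0 < β) (d : ℝ) (hd : d ≠ 0) :
    0 < β * (Real.exp (-(α*d)) - 1) + α * (Real.exp (β*d) - 1) := by
  nlinarith [Real.add_one_lt_exp (show -(α*d) ≠ 0 by simp [hα.ne', hd]),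
    Real.add_one_lt_exp (show β*d ≠ 0 by simp [hβ.ne', hd])]


set_option maxHeartbeats 1000000

/-- Explicit solution of the one-round trading problem in an
exponential-utility market, and the resulting post-trade price. -/
theorem stmt_6 (I : ℕ) (hI : 2 ≤ I) (α β C : ℝ) (hα : 0 < α) (hβ : 0 < β) (hC : 0 < C)
    (π θ : Fin I → ℝ) (hπ : ∀ i, 0 < π i) (hθ : ∀ i, 0 < θ i) :
    let ζ : ℝ := ((∑ k, θ k ^ (α / (α + β)) * π k ^ (β / (α + β))) / C) ^ ((α + β) / β)
    let zstar : Fin I → ℝ := fun i => (1 / (α + β)) * Real.log (π i / (ζ * θ i))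
    -- `zstar` is feasible
    (∑ i, θ i * Real.exp (β * zstar i) ≤ C) ∧
    -- `zstar` is optimal
    (∀ z : Fin I → ℝ, (∑ i, θ i * Real.exp (β * z i)) ≤ C →
      -(1 / α) * ∑ i, π i * Real.exp (-(α * z i)) ≤
        -(1 / α) * ∑ i, π i * Real.exp (-(α * zstar i))) ∧
    -- `zstar` is the unique optimal solution
    (∀ z : Fin I → ℝ, (∑ i, θ i * Real.exp (β * z i)) ≤ C →
      -(1 / α) * ∑ i, π i * Real.exp (-(α * z i)) =
        -(1 / α) * ∑ i, π i * Real.exp (-(α * zstar i)) →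
      z = zstar) ∧
    -- post-trade price
    (∀ i, θ i * Real.exp (β * zstar i) / ∑ k, θ k * Real.exp (β * zstar k) =
      θ i ^ (α / (α + β)) * π i ^ (β / (α + β)) /
        ∑ k, θ k ^ (α / (α + β)) * π k ^ (β / (α + β))) := by
  intro ζ zstar
  have hab : 0 < α + β := by linarith
  set S : ℝ := ∑ k, θ k ^ (α / (α + β)) * π k ^ (β / (α + β)) with hSdef
  have hne : (Finset.univ : Finset (Fin I)).Nonempty := by
    refine Finset.univ_nonempty_iff.mpr ?_
    exact Fin.pos_iff_nonempty.mp (by omega)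
  have hS : 0 < S := by
    refine Finset.sum_pos (fun i _ => ?_) hne
    have h1 := hθ i; have h2 := hπ i
    positivity
  have hζdef : ζ = (S / C) ^ ((α + β) / β) := rfl
  have hζ : 0 < ζ := Real.rpow_pos_of_pos (by positivity) _
  have hzdef : zstar = fun i => (1 / (α + β)) * Real.log (π i / (ζ * θ i)) := rfl
  have hr : ∀ i, 0 < π i / (ζ * θ i) := fun i => by have := hθ i; have := hπ i; positivity
  have hζt : ζ ^ (β / (α + β)) = S / C := by
    rw [hζdef, ← Real.rpow_mul (by positivity)]
    rw [show (α + β) / β * (β / (α + β)) = 1 by field_simp, Real.rpow_one]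
  have hA : ∀ i, θ i * Real.exp (β * zstar i)
      = θ i ^ (α / (α + β)) * π i ^ (β / (α + β)) * (C / S) := by
    intro i
    have h1 : β * zstar i = Real.log (π i / (ζ * θ i)) * (β / (α + β)) := by
      rw [hzdef]; field_simp
    rw [h1, ← Real.rpow_def_of_pos (hr i)]
    rw [Real.div_rpow (le_of_lt (hπ i)) (mul_pos hζ (hθ i)).le,
        Real.mul_rpow hζ.le (hθ i).le, hζt]
    have hts : θ i ^ (α / (α + β)) = θ i / θ i ^ (β / (α + β)) := by
      rw [show α / (α + β) = 1 - β / (α + β) by field_simp; ring,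
        Real.rpow_sub (hθ i), Real.rpow_one]
    rw [hts]
    have h2 : θ i ^ (β / (α + β)) ≠ 0 := (Real.rpow_pos_of_pos (hθ i) _).ne'
    field_simp
  have hSum : ∑ i, θ i * Real.exp (β * zstar i) = C := by
    rw [Finset.sum_congr rfl (fun i _ => hA i), ← Finset.sum_mul, ← hSdef]
    field_simp
  have hG : ∀ i, π i * Real.exp (-(α * zstar i)) = ζ * (θ i * Real.exp (β * zstar i)) := by
    intro i
    have h1 : -(α * zstar i) = β * zstar i + -((α + β) * zstar i) := by ring
    have h2 : (α + β) * zstar i = Real.log (π i / (ζ * θ i)) := by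
      rw [hzdef]; field_simp
    rw [h1, Real.exp_add, h2, Real.exp_neg, Real.exp_log (hr i)]
    have := (hθ i).ne'
    have := (hπ i).ne'
    field_simp
  -- per-coordinate inequality
  have expand : ∀ (i : Fin I) (x : ℝ),
      π i * Real.exp (-(α * x)) -
        (π i * Real.exp (-(α * zstar i)) +
          α / β * ζ * (θ i * Real.exp (β * zstar i) - θ i * Real.exp (β * x)))
      = (1 / β) * ((π i * Real.exp (-(α * zstar i))) *
          (β * (Real.exp (-(α * (x - zstar i))) - 1) +
           α * (Real.exp (β * (x - zstar i)) - 1))) := by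
    intro i x
    have e1 : π i * Real.exp (-(α * x))
        = (π i * Real.exp (-(α * zstar i))) * Real.exp (-(α * (x - zstar i))) := by
      rw [show -(α * x) = -(α * zstar i) + -(α * (x - zstar i)) by ring, Real.exp_add]; ring
    have e2 : ζ * (θ i * Real.exp (β * x))
        = (π i * Real.exp (-(α * zstar i))) * Real.exp (β * (x - zstar i)) := by
      rw [hG i, show β * x = β * zstar i + β * (x - zstar i) by ring, Real.exp_add]; ring
    have e3 := hG i
    field_simp
    rw [mul_comm (zstar i) β, mul_comm x β]
    linear_combination β * e1 + α * e2 + α * e3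
  have hP : ∀ i, 0 < π i * Real.exp (-(α * zstar i)) :=
    fun i => mul_pos (hπ i) (Real.exp_pos _)
  have key : ∀ (i : Fin I) (x : ℝ),
      π i * Real.exp (-(α * zstar i)) +
        α / β * ζ * (θ i * Real.exp (β * zstar i) - θ i * Real.exp (β * x))
      ≤ π i * Real.exp (-(α * x)) := by
    intro i x
    have h := mul_nonneg (mul_nonneg (by positivity : (0:ℝ) ≤ 1/β) (hP i).le)
      (aux_key α β hα hβ (x - zstar i))
    have := expand i x
    nlinarith [h, this]
  have keys : ∀ (i : Fin I) (x : ℝ), x ≠ zstar i →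
      π i * Real.exp (-(α * zstar i)) +
        α / β * ζ * (θ i * Real.exp (β * zstar i) - θ i * Real.exp (β * x))
      < π i * Real.exp (-(α * x)) := by
    intro i x hx
    have h := mul_pos (mul_pos (by positivity : (0:ℝ) < 1/β) (hP i))
      (aux_key_strict α β hα hβ (x - zstar i) (sub_ne_zero_of_ne hx))
    have := expand i x
    nlinarith [h, this]
  -- sum of the lower bounds
  have hsum2 : ∀ z : Fin I → ℝ,
      ∑ i, (π i * Real.exp (-(α * zstar i)) +
        α / β * ζ * (θ i * Real.exp (β * zstar i) - θ i * Real.exp (β * z i)))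
      = (∑ i, π i * Real.exp (-(α * zstar i))) +
        α / β * ζ * (C - ∑ i, θ i * Real.exp (β * z i)) := by
    intro z
    rw [Finset.sum_add_distrib, ← Finset.mul_sum, Finset.sum_sub_distrib, hSum]
  refine ⟨le_of_eq hSum, ?_, ?_, ?_⟩
  · intro z hz
    have h1 : ∑ i, (π i * Real.exp (-(α * zstar i)) +
        α / β * ζ * (θ i * Real.exp (β * zstar i) - θ i * Real.exp (β * z i)))
        ≤ ∑ i, π i * Real.exp (-(α * z i)) :=
      Finset.sum_le_sum (fun i _ => key i (z i))
    rw [hsum2 z] at h1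
    have h2 : 0 ≤ α / β * ζ * (C - ∑ i, θ i * Real.exp (β * z i)) := by
      have : 0 ≤ C - ∑ i, θ i * Real.exp (β * z i) := by linarith
      positivity
    have h3 : (∑ i, π i * Real.exp (-(α * zstar i))) ≤ ∑ i, π i * Real.exp (-(α * z i)) := by
      linarith
    have h4 : 0 < 1 / α := by positivity
    nlinarith [h3, h4]
  · intro z hz heq
    have hfz : ∑ i, π i * Real.exp (-(α * z i)) = ∑ i, π i * Real.exp (-(α * zstar i)) := by
      have hne' : -(1/α) ≠ 0 := by
        simp only [neg_ne_zero]; positivity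
      exact mul_left_cancel₀ hne' heq
    funext i
    by_contra hne'
    have h1 : ∑ i, (π i * Real.exp (-(α * zstar i)) +
        α / β * ζ * (θ i * Real.exp (β * zstar i) - θ i * Real.exp (β * z i)))
        < ∑ i, π i * Real.exp (-(α * z i)) := by
      refine Finset.sum_lt_sum (fun j _ => key j (z j)) ⟨i, Finset.mem_univ i, keys i (z i) hne'⟩
    rw [hsum2 z] at h1
    have h2 : 0 ≤ α / β * ζ * (C - ∑ i, θ i * Real.exp (β * z i)) := by
      have : 0 ≤ C - ∑ i, θ i * Real.exp (β * z i) := by linarith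
      positivity
    rw [hfz] at h1
    linarith
  · intro i
    rw [hSum, hA i]
    field_simp
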